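/- Let 0 < α < 1 and let F be an α-SR distribution on the discrete set {1, …, L}, i.e. F : {0,1,…,L} → [0,1] is nondecreasing with F(0) = 0, F(L) = 1 and F(v) > F(v−1) for each v ∈ {1,…,L}, and its discrete virtual valuation φ(v) = v − (1−F(v))/(F(v)−F(v−1)) satisfies φ(y) − φ(x) ≥ α(y−x) for all integers 1 ≤ x < y ≤ L. Then Pr_{v∼F}[φ(v) > αv/2] ≥ (α/(2−α))^{1/(1−α)}, i.e. the sum of F(v)−F(v−1) over all v ∈ {1,…,L} with φ(v) > αv/2 is at least (α/(2−α))^{1/(1−α)}. -/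

import Mathlib

noncomputable def discreteVirtualValue (F : ℕ → ℝ) (v : ℕ) : ℝ :=
  (v : ℝ) - (1 - F v) / (F v - F (v - 1))

set_option maxHeartbeats 1000000 in
theorem discrete_virtual_value_large_prob (α : ℝ) (L : ℕ) (F : ℕ → ℝ)
    (hα0 : 0 < α) (hα1 : α < 1) (hL : 1 ≤ L)
    (hF0 : F 0 = 0) (hFL : F L = 1)
    (hpos : ∀ v ∈ Finset.Icc 1 L, F (v - 1) < F v)
    (hSR : ∀ x y, 1 ≤ x → x < y → y ≤ L →
      discreteVirtualValue F y - discreteVirtualValue F x ≥ α * ((y : ℝ) - (x : ℝ))) :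
    (α / (2 - α)) ^ (1 / (1 - α) : ℝ) ≤
      ∑ v ∈ (Finset.Icc 1 L).filter
          (fun v => discreteVirtualValue F v > α * (v : ℝ) / 2),
        (F v - F (v - 1)) := by
  set φ := discreteVirtualValue F with hφ
  have hfpos : ∀ v, 1 ≤ v → v ≤ L → 0 < F v - F (v - 1) := by
    intro v h1 h2
    have := hpos v (Finset.mem_Icc.mpr ⟨h1, h2⟩)
    linarith
  -- φ L = L
  have hφL : φ L > α * (L : ℝ) / 2 := by
    have : φ L = (L : ℝ) := by
      simp [hφ, discreteVirtualValue, hFL]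
    rw [this]
    have hL1 : (1:ℝ) ≤ (L:ℝ) := by exact_mod_cast hL
    nlinarith
  have hex : ∃ v, (1 ≤ v ∧ v ≤ L) ∧ φ v > α * (v : ℝ) / 2 := ⟨L, ⟨hL, le_refl L⟩, hφL⟩
  classical
  set vs := Nat.find hex with hvs
  obtain ⟨⟨hvs1, hvsL⟩, hvsφ⟩ := Nat.find_spec hex
  -- minimality
  have hmin : ∀ v, 1 ≤ v → v < vs → φ v ≤ α * (v : ℝ) / 2 := by
    intro v h1 h2
    have := Nat.find_min hex h2
    push_neg at this
    exact this ⟨h1, le_trans (Nat.le_of_lt (lt_of_lt_of_le h2 hvsL)) (le_refl L)⟩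
  set m := vs - 1 with hm
  have hvsm : vs = m + 1 := (Nat.succ_pred_eq_of_pos (lt_of_lt_of_le Nat.one_pos hvs1)).symm
  -- the filter contains Icc vs L
  have hsubset : Finset.Icc vs L ⊆ (Finset.Icc 1 L).filter
      (fun v => discreteVirtualValue F v > α * (v : ℝ) / 2) := by
    intro v hv
    rw [Finset.mem_Icc] at hv
    rw [Finset.mem_filter, Finset.mem_Icc]
    refine ⟨⟨le_trans hvs1 hv.1, hv.2⟩, ?_⟩
    rcases eq_or_lt_of_le hv.1 with h | h
    · rw [← h]; exact hvsφ
    · have := hSR vs v hvs1 h hv.2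
      have hcast : (vs : ℝ) ≤ (v : ℝ) := by exact_mod_cast le_of_lt h
      have : φ v ≥ φ vs + α * ((v:ℝ) - vs) := by rw [hφ] at *; linarith [hSR vs v hvs1 h hv.2]
      nlinarith
  -- telescoping sum
  have htele : ∀ n, vs ≤ n → ∑ v ∈ Finset.Icc vs n, (F v - F (v - 1)) = F n - F (vs - 1) := by
    intro n hn
    induction n with
    | zero => omega
    | succ k ih =>
      rcases Nat.lt_or_ge vs (k+1) with h | h
      · have hk : vs ≤ k := Nat.lt_succ_iff.mp h
        rw [Finset.sum_Icc_succ_top hn, ih hk]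
        simp
        try ring
      · have hvk : vs = k + 1 := le_antisymm hn h
        rw [hvk]
        simp
  have hsum_ge : F L - F m ≤ ∑ v ∈ (Finset.Icc 1 L).filter
      (fun v => discreteVirtualValue F v > α * (v : ℝ) / 2), (F v - F (v - 1)) := by
    have h1 := htele L hvsL
    rw [← hm] at h1
    rw [← h1]
    apply Finset.sum_le_sum_of_subset_of_nonneg hsubset
    intro v hv _
    rw [Finset.mem_filter, Finset.mem_Icc] at hv
    exact le_of_lt (hfpos v hv.1.1 hv.1.2)
  rw [hFL] at hsum_ge
  -- now suffices to bound 1 - F m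
  refine le_trans ?_ hsum_ge
  rcases Nat.eq_zero_or_pos m with hm0 | hm1
  · rw [hm0, hF0]
    have hbase : α / (2 - α) ≤ 1 := by
      rw [div_le_one (by linarith)]; linarith
    have h2 : (α / (2 - α)) ^ (1 / (1 - α) : ℝ) ≤ 1 :=
      Real.rpow_le_one (le_of_lt (div_pos hα0 (by linarith))) hbase
        (by have h1α : (0:ℝ) < 1 - α := by linarith
            positivity)
    linarith
  -- main case m ≥ 1
  have h1α : (0:ℝ) < 1 - α := by linarith
  have hmR : (1:ℝ) ≤ (m:ℝ) := by exact_mod_cast hm1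
  set β : ℝ := 1 / (1 - α) with hβ
  have hβ0 : 0 ≤ β := by positivity
  set e : ℕ → ℝ := fun v => (1 - α) * v + α * m / 2 with he
  have hepos : ∀ v : ℕ, 0 < e v := by
    intro v
    have h1 : (0:ℝ) ≤ (v:ℝ) := Nat.cast_nonneg v
    have h2 : 0 < α * (m:ℝ) / 2 := by nlinarith
    simp only [he]
    nlinarith
  have hegt : ∀ v : ℕ, 1 ≤ v → 1 - α < e v := by
    intro v h1
    have h1' : (1:ℝ) ≤ (v:ℝ) := by exact_mod_cast h1
    have h2 : 0 < α * (m:ℝ) / 2 := by nlinarith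
    simp only [he]
    nlinarith
  have heprev : ∀ v : ℕ, 1 ≤ v → e (v - 1) = e v - (1 - α) := by
    intro v h1
    simp only [he]
    rw [Nat.cast_sub h1]
    push_cast
    ring
  have hmL : m < L := lt_of_lt_of_le (Nat.sub_lt (by omega) Nat.one_pos) hvsL
  -- step A : hazard-rate bound below the threshold
  have hstepA : ∀ v, 1 ≤ v → v ≤ m → e v * (F v - F (v - 1)) ≤ 1 - F v := by
    intro v h1 h2
    have hvL : v ≤ L := le_trans h2 (le_of_lt hmL)
    have hfv := hfpos v h1 hvL
    have hφv : φ v ≤ α * (v:ℝ) - α * (m:ℝ) / 2 := by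
      have hφm : φ m ≤ α * (m:ℝ) / 2 := hmin m hm1 (by omega)
      rcases eq_or_lt_of_le h2 with h | h
      · subst h; linarith
      · have hsr := hSR v m h1 h (le_of_lt hmL)
        have hcast : (v:ℝ) ≤ (m:ℝ) := by exact_mod_cast le_of_lt h
        linarith
    have hdef : (1 - F v) / (F v - F (v - 1)) = (v:ℝ) - φ v := by
      rw [hφ]; simp only [discreteVirtualValue]; ring
    have hge : e v ≤ (1 - F v) / (F v - F (v - 1)) := by
      rw [hdef]
      simp only [he]
      linarith
    calc e v * (F v - F (v-1)) ≤ ((1 - F v) / (F v - F (v - 1))) * (F v - F (v-1)) := by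
          exact mul_le_mul_of_nonneg_right hge (le_of_lt hfv)
      _ = 1 - F v := by field_simp
  -- step B : Bernoulli bound
  have hstepB : ∀ v, 1 ≤ v → 1 + 1 / e v ≤ (e v / e (v - 1)) ^ β := by
    intro v h1
    have hev := hepos v
    have hevp := hepos (v - 1)
    have hx : (0:ℝ) < 1 / e v := by positivity
    have hB : (1 + 1 / e v) ^ (1 - α) ≤ 1 + (1 - α) * (1 / e v) :=
      rpow_one_add_le_one_add_mul_self (by linarith) (le_of_lt h1α) (by linarith)
    have ht1 : (1 - α) * (1 / e v) < 1 := by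
      rw [mul_one_div, div_lt_one hev]
      exact hegt v h1
    have ht0 : 0 < (1 - α) * (1 / e v) := by positivity
    have hC : 1 + (1 - α) * (1 / e v) ≤ 1 / (1 - (1 - α) * (1 / e v)) := by
      have ht1' := ht1
      have ht0' := ht0
      set t := (1 - α) * (1 / e v) with htt
      rw [le_div_iff₀ (by linarith)]
      nlinarith [sq_nonneg t]
    have hD : 1 / (1 - (1 - α) * (1 / e v)) = e v / e (v - 1) := by
      have hne : e v ≠ 0 := ne_of_gt hev
      have hne2 : e v - (1 - α) ≠ 0 := by have := hegt v h1; intro hc; rw [sub_eq_zero] at hc; linarith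
      rw [heprev v h1, mul_one_div]
      rw [eq_div_iff hne2]
      rw [one_div, inv_mul_eq_div, div_eq_iff]
      · field_simp
      · intro hc
        rw [sub_eq_zero] at hc
        have : (1 - α) / e v < 1 := by rw [div_lt_one hev]; exact hegt v h1
        linarith
    have hE : (1 + 1 / e v) ^ (1 - α) ≤ e v / e (v - 1) := by
      rw [← hD]; linarith
    have hF' : ((1 + 1 / e v) ^ (1 - α) : ℝ) ^ β ≤ (e v / e (v - 1)) ^ β :=
      Real.rpow_le_rpow (by positivity) hE hβ0
    have hpow : ((1 + 1 / e v) ^ (1 - α) : ℝ) ^ β = 1 + 1 / e v := by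
      rw [← Real.rpow_mul (by positivity), hβ, mul_one_div, div_self (ne_of_gt h1α),
        Real.rpow_one]
    rwa [hpow] at hF'
  -- main induction
  have hind : ∀ k, k ≤ m → 1 ≤ (1 - F k) * (e k / e 0) ^ β := by
    intro k hk
    induction k with
    | zero =>
      rw [hF0, div_self (ne_of_gt (hepos 0)), Real.one_rpow]
      norm_num
    | succ n ih =>
      have ihn := ih (le_trans (Nat.le_succ n) hk)
      have hA := hstepA (n+1) (Nat.le_add_left 1 n) hk
      have hB := hstepB (n+1) (Nat.le_add_left 1 n)
      simp only [Nat.add_sub_cancel] at hA hB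
      have hfp := hfpos (n+1) (Nat.le_add_left 1 n) (by omega)
      simp only [Nat.add_sub_cancel] at hfp
      have hFn1 : 0 < 1 - F (n+1) := lt_of_lt_of_le (mul_pos (hepos (n+1)) hfp) hA
      have h2 : 1 - F n ≤ (1 - F (n+1)) * (1 + 1 / e (n+1)) := by
        have hf : F (n+1) - F n ≤ (1 - F (n+1)) / e (n+1) := by
          rw [le_div_iff₀ (hepos (n+1))]
          calc (F (n+1) - F n) * e (n+1) = e (n+1) * (F (n+1) - F n) := by ring
            _ ≤ 1 - F (n+1) := hA
        have heq : (1 - F (n+1)) * (1 + 1 / e (n+1))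
            = (1 - F (n+1)) + (1 - F (n+1)) / e (n+1) := by ring
        rw [heq]
        linarith
      have h3 : 1 - F n ≤ (1 - F (n+1)) * (e (n+1) / e n) ^ β :=
        le_trans h2 (mul_le_mul_of_nonneg_left hB (le_of_lt hFn1))
      have hP : (0:ℝ) ≤ (e n / e 0) ^ β :=
        le_of_lt (Real.rpow_pos_of_pos (div_pos (hepos n) (hepos 0)) β)
      have h5 : (e (n+1) / e n) ^ β * (e n / e 0) ^ β = (e (n+1) / e 0) ^ β := by
        rw [← Real.mul_rpow (le_of_lt (div_pos (hepos (n+1)) (hepos n)))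
          (le_of_lt (div_pos (hepos n) (hepos 0)))]
        congr 1
        rw [div_mul_div_comm, mul_comm (e n) (e 0), mul_div_mul_right _ _ (hepos n).ne']
      calc 1 ≤ (1 - F n) * (e n / e 0) ^ β := ihn
        _ ≤ (1 - F (n+1)) * (e (n+1) / e n) ^ β * (e n / e 0) ^ β :=
            mul_le_mul_of_nonneg_right h3 hP
        _ = (1 - F (n+1)) * (e (n+1) / e 0) ^ β := by rw [mul_assoc, h5]
  have hfinal := hind m (le_refl m)
  have hratio : e m / e 0 = (2 - α) / α := by
    simp only [he, Nat.cast_zero, mul_zero, zero_add]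
    rw [div_eq_div_iff (by nlinarith) hα0.ne']
    ring
  rw [hratio] at hfinal
  have hxpos : (0:ℝ) < ((2 - α) / α) ^ β := Real.rpow_pos_of_pos (div_pos (by linarith) hα0) β
  have hgoal : (α / (2 - α)) ^ β = 1 / ((2 - α) / α) ^ β := by
    rw [one_div, ← Real.inv_rpow (le_of_lt (div_pos (by linarith) hα0)), inv_div]
  rw [hgoal, div_le_iff₀ hxpos]
  linarith
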